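/- arXiv:2602.06339 — 3 statements merged into one kernel-verified Lean document; each statement's English description precedes it below -/
import Mathlib

section
/- Let Z ⊆ ℝ^m be a nonempty, open, path-connected set and let μ be a probability measure on ℝ^m, absolutely continuous with respect to Lebesgue measure, whose density ρ satisfies ρ(z) > 0 for almost every z ∈ Z and, for every compact K ⊆ Z, ρ(z) ≥ ρ_min(K) for almost every z ∈ K for some constant ρ_min(K) > 0. Let f : Z → ℝ^d be continuous, let A_safe ⊆ ℝ^d have two distinct path-connected components U_L and U_R, and suppose the forbidden region A_forb := ℝ^d \ A_safe is open in ℝ^d. If there exist z_L, z_R ∈ Z with f(z_L) ∈ U_L and f(z_R) ∈ U_R, then the seam set {z ∈ Z : f(z) ∈ A_forb} is nonempty, open in Z, and has strictly positive μ-measure: μ({z ∈ Z : f(z) ∈ A_forb}) > 0. -/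
open MeasureTheory

/-- **Topological Barrier (Lemma: nonempty, open seam with positive probability mass).**
Let `Z ⊆ ℝ^m` be nonempty, open, path-connected, and let `μ` be a probability measure
that is absolutely continuous w.r.t. Lebesgue measure with density `ρ` which is a.e.
positive on `Z` and a.e. bounded below by a positive constant on every compact `K ⊆ Z`.
Let `f` be continuous on `Z`, let `U_L ≠ U_R` be path components of `A_safe`, and suppose
the forbidden region `A_forb = ℝ^d \ A_safe` is open. If `f` hits both `U_L` and `U_R`
from `Z`, then the seam `{z ∈ Z : f z ∈ A_forb}` is nonempty, open, and `μ`-positive. -/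
theorem topological_barrier
    {m d : ℕ} (Z : Set (Fin m → ℝ))
    (hZne : Z.Nonempty) (hZopen : IsOpen Z) (hZpc : IsPathConnected Z)
    (μ : Measure (Fin m → ℝ)) [IsProbabilityMeasure μ]
    (ρ : (Fin m → ℝ) → ENNReal)
    (hρmeas : Measurable ρ)
    (hμ : μ = volume.withDensity ρ)
    (hρpos : ∀ᵐ z ∂(volume : Measure (Fin m → ℝ)), z ∈ Z → 0 < ρ z)
    (hρmin : ∀ K : Set (Fin m → ℝ), K ⊆ Z → IsCompact K →
      ∃ ρmin : ENNReal, 0 < ρmin ∧ ∀ᵐ z ∂(volume : Measure (Fin m → ℝ)), z ∈ K → ρmin ≤ ρ z)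
    (f : (Fin m → ℝ) → (Fin d → ℝ)) (hf : ContinuousOn f Z)
    (Asafe Aforb : Set (Fin d → ℝ))
    (hAforb : Aforb = Set.univ \ Asafe) (hAforbOpen : IsOpen Aforb)
    (aL aR : Fin d → ℝ) (haL : aL ∈ Asafe) (haR : aR ∈ Asafe)
    (UL UR : Set (Fin d → ℝ))
    (hUL : UL = pathComponentIn Asafe aL)
    (hUR : UR = pathComponentIn Asafe aR)
    (hdistinct : UL ≠ UR)
    (zL zR : Fin m → ℝ) (hzL : zL ∈ Z) (hzR : zR ∈ Z)
    (hfL : f zL ∈ UL) (hfR : f zR ∈ UR) :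
    {z ∈ Z | f z ∈ Aforb}.Nonempty ∧
    IsOpen {z ∈ Z | f z ∈ Aforb} ∧
    0 < μ {z ∈ Z | f z ∈ Aforb} := by
  -- setup
  set S := {z ∈ Z | f z ∈ Aforb} with hS
  have hSopen : IsOpen S := by
    have : S = Z ∩ f ⁻¹' Aforb := by ext z; simp [hS, Set.mem_setOf_eq, and_comm]
    rw [this]
    exact hf.isOpen_inter_preimage hZopen hAforbOpen
  have hSsub : S ⊆ Z := fun z hz => hz.1
  -- nonempty
  have hSne : S.Nonempty := by
    by_contra hemp
    rw [Set.not_nonempty_iff_eq_empty] at hemp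
    have hmaps : ∀ z ∈ Z, f z ∈ Asafe := by
      intro z hz
      by_contra hn
      have : z ∈ S := ⟨hz, by rw [hAforb]; exact ⟨Set.mem_univ _, hn⟩⟩
      simp [hemp] at this
    obtain ⟨γ, hγ⟩ := hZpc.joinedIn zL hzL zR hzR
    have hcont : Continuous (f ∘ γ) :=
      hf.comp_continuous γ.continuous (fun t => hγ t)
    have hjoin : JoinedIn Asafe (f zL) (f zR) := by
      refine ⟨⟨⟨f ∘ γ, hcont⟩, by simp, by simp⟩, ?_⟩
      intro t
      exact hmaps _ (hγ t)
    have hL : JoinedIn Asafe aL (f zL) := by rw [hUL] at hfL; exact hfL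
    have hR : JoinedIn Asafe aR (f zR) := by rw [hUR] at hfR; exact hfR
    have : JoinedIn Asafe aL aR := (hL.trans hjoin).trans hR.symm
    have haR' : aR ∈ pathComponentIn Asafe aL := this
    have := pathComponentIn_congr haR'
    exact hdistinct (by rw [hUL, hUR, this])
  refine ⟨hSne, hSopen, ?_⟩
  -- positive measure
  obtain ⟨z0, hz0⟩ := hSne
  obtain ⟨r, hr, hball⟩ := Metric.isOpen_iff.mp hSopen z0 hz0
  have hrpos : (0 : ℝ) < r / 2 := by linarith
  have hKsub : Metric.closedBall z0 (r / 2) ⊆ S :=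
    (Metric.closedBall_subset_ball (by linarith)).trans hball
  have hKcomp : IsCompact (Metric.closedBall z0 (r / 2)) := isCompact_closedBall _ _
  obtain ⟨ρmin, hρminpos, hρminle⟩ := hρmin _ (hKsub.trans hSsub) hKcomp
  have hKmeas : MeasurableSet (Metric.closedBall z0 (r / 2)) :=
    measurableSet_closedBall
  have hvolpos : 0 < volume (Metric.closedBall z0 (r / 2)) :=
    Metric.measure_closedBall_pos _ _ hrpos
  have hμK : ρmin * volume (Metric.closedBall z0 (r / 2)) ≤ μ (Metric.closedBall z0 (r / 2)) := by
    rw [hμ, withDensity_apply _ hKmeas]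
    calc ρmin * volume (Metric.closedBall z0 (r / 2))
        = ∫⁻ _ in Metric.closedBall z0 (r / 2), ρmin ∂volume := by
          rw [setLIntegral_const, mul_comm]
      _ ≤ ∫⁻ z in Metric.closedBall z0 (r / 2), ρ z ∂volume := by
          apply setLIntegral_mono_ae hρmeas.aemeasurable
          exact hρminle
  have h1 : 0 < ρmin * volume (Metric.closedBall z0 (r / 2)) :=
    ENNReal.mul_pos hρminpos.ne' hvolpos.ne'
  calc (0 : ENNReal) < ρmin * volume (Metric.closedBall z0 (r / 2)) := h1
    _ ≤ μ (Metric.closedBall z0 (r / 2)) := hμK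
    _ ≤ μ S := measure_mono hKsub
end

section
/- Let K ≥ 1 and let Φ_0, …, Φ_{K−1} : ℝ^d → ℝ^d be C¹ diffeomorphisms such that for each t there is λ_t > 0 with ‖DΦ_t(z) v‖ ≥ λ_t ‖v‖ for all z, v ∈ ℝ^d, and set F^{(K)} := Φ_{K−1} ∘ ⋯ ∘ Φ_0. Let μ be a probability measure on ℝ^d, absolutely continuous with respect to Lebesgue measure, with density ρ ≤ ρ_max almost everywhere. Let M_δ ⊆ ℝ^d be measurable with Lebesgue volume Vol(M_δ) ≤ C δ^{d−k} for constants C > 0, δ > 0, and integers 0 ≤ k < d. Then F^{(K)} is injective, its derivative satisfies ‖DF^{(K)}(z) v‖ ≥ (∏_{t=0}^{K−1} λ_t) ‖v‖ for all z, v, and for any measurable S ⊆ M_δ the hallucination probability satisfies μ({z : F^{(K)}(z) ∉ S}) ≥ 1 − C ρ_max (∏_{t=0}^{K−1} λ_t)^{−d} δ^{d−k}. In particular, if λ_t ≥ λ ∈ (0,1] for all t, then μ({z : F^{(K)}(z) ∉ S}) ≥ 1 − C ρ_max λ^{−dK} δ^{d−k}. -/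
open MeasureTheory

/-- `compChain Φ K = Φ_{K-1} ∘ ⋯ ∘ Φ_0`. -/
def compChain {E : Type*} (Φ : ℕ → E → E) : ℕ → E → E
  | 0 => id
  | K + 1 => Φ K ∘ compChain Φ K

/-- `invChain Ψ K = Ψ_0 ∘ ⋯ ∘ Ψ_{K-1}` (inverse chain, reversed order). -/
def invChain {E : Type*} (Ψ : ℕ → E → E) : ℕ → E → E
  | 0 => id
  | K + 1 => invChain Ψ K ∘ Ψ K

lemma abs_det_le_norm_pow {d : ℕ}
    (B : EuclideanSpace ℝ (Fin d) →L[ℝ] EuclideanSpace ℝ (Fin d)) :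
    |B.det| ≤ ‖B‖ ^ d := by
  set E := EuclideanSpace ℝ (Fin d)
  have hd : Module.finrank ℝ E = d := finrank_euclideanSpace_fin
  have hsub : B '' Metric.closedBall (0 : E) 1 ⊆ Metric.closedBall 0 ‖B‖ := by
    rintro y ⟨x, hx, rfl⟩
    rw [mem_closedBall_zero_iff] at hx ⊢
    calc ‖B x‖ ≤ ‖B‖ * ‖x‖ := B.le_opNorm x
      _ ≤ ‖B‖ * 1 := by nlinarith [norm_nonneg B]
      _ = ‖B‖ := mul_one _
  have h1 : ENNReal.ofReal |B.det| * volume (Metric.closedBall (0 : E) 1)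
      ≤ ENNReal.ofReal (‖B‖ ^ d) * volume (Metric.closedBall (0 : E) 1) := by
    calc ENNReal.ofReal |B.det| * volume (Metric.closedBall (0 : E) 1)
        = volume (B '' Metric.closedBall (0 : E) 1) := by
          rw [Measure.addHaar_image_continuousLinearMap]
      _ ≤ volume (Metric.closedBall (0 : E) ‖B‖) := measure_mono hsub
      _ = ENNReal.ofReal (‖B‖ ^ d) * volume (Metric.closedBall (0 : E) 1) := by
          rw [Measure.addHaar_closedBall' volume (0 : E) (norm_nonneg B), hd]
  have h2 : ENNReal.ofReal |B.det| ≤ ENNReal.ofReal (‖B‖ ^ d) := by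
    have hpos : volume (Metric.closedBall (0 : E) 1) ≠ 0 :=
      (Metric.measure_closedBall_pos volume _ one_pos).ne'
    have hfin : volume (Metric.closedBall (0 : E) 1) ≠ ⊤ :=
      measure_closedBall_lt_top.ne
    exact (ENNReal.mul_le_mul_iff_left hpos hfin).1 h1
  exact (ENNReal.ofReal_le_ofReal_iff (by positivity)).1 h2

section chains

variable {d K : ℕ} {Φ Φinv : ℕ → EuclideanSpace ℝ (Fin d) → EuclideanSpace ℝ (Fin d)}

lemma compChain_contDiff (hΦ : ∀ t < K, ContDiff ℝ 1 (Φ t)) :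
    ∀ n ≤ K, ContDiff ℝ 1 (compChain Φ n) := by
  intro n
  induction n with
  | zero => intro _; simpa only [compChain] using contDiff_id
  | succ n ih =>
    intro h
    exact (hΦ n (Nat.lt_of_succ_le h)).comp (ih (Nat.le_of_succ_le h))

lemma invChain_contDiff (hΦinv : ∀ t < K, ContDiff ℝ 1 (Φinv t)) :
    ∀ n ≤ K, ContDiff ℝ 1 (invChain Φinv n) := by
  intro n
  induction n with
  | zero => intro _; simpa only [invChain] using contDiff_id
  | succ n ih =>
    intro h
    exact (ih (Nat.le_of_succ_le h)).comp (hΦinv n (Nat.lt_of_succ_le h))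

lemma invChain_leftInverse (hleft : ∀ t < K, Function.LeftInverse (Φinv t) (Φ t)) :
    ∀ n ≤ K, Function.LeftInverse (invChain Φinv n) (compChain Φ n) := by
  intro n
  induction n with
  | zero => intro _ z; rfl
  | succ n ih =>
    intro h z
    show invChain Φinv n (Φinv n (Φ n (compChain Φ n z))) = z
    rw [hleft n (Nat.lt_of_succ_le h) (compChain Φ n z)]
    exact ih (Nat.le_of_succ_le h) z

lemma invChain_rightInverse (hright : ∀ t < K, Function.RightInverse (Φinv t) (Φ t)) :
    ∀ n ≤ K, Function.RightInverse (invChain Φinv n) (compChain Φ n) := by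
  intro n
  induction n with
  | zero => intro _ z; rfl
  | succ n ih =>
    intro h s
    show Φ n (compChain Φ n (invChain Φinv n (Φinv n s))) = s
    rw [ih (Nat.le_of_succ_le h) (Φinv n s)]
    exact hright n (Nat.lt_of_succ_le h) s

lemma compChain_deriv_lb (hΦ : ∀ t < K, ContDiff ℝ 1 (Φ t)) (lam : ℕ → ℝ)
    (hlam : ∀ t < K, 0 < lam t)
    (hD : ∀ t < K, ∀ z v, lam t * ‖v‖ ≤ ‖fderiv ℝ (Φ t) z v‖) :
    ∀ n ≤ K, ∀ z v,
      (∏ t ∈ Finset.range n, lam t) * ‖v‖ ≤ ‖fderiv ℝ (compChain Φ n) z v‖ := by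
  intro n
  induction n with
  | zero =>
    intro _ z v
    simp only [compChain, Finset.range_zero, Finset.prod_empty, one_mul, fderiv_id,
      ContinuousLinearMap.id_apply, le_refl]
  | succ n ih =>
    intro h z v
    have hn : n < K := Nat.lt_of_succ_le h
    have hnK : n ≤ K := Nat.le_of_succ_le h
    have hdiff1 : DifferentiableAt ℝ (Φ n) (compChain Φ n z) :=
      ((hΦ n hn).differentiable one_ne_zero).differentiableAt
    have hdiff2 : DifferentiableAt ℝ (compChain Φ n) z :=
      ((compChain_contDiff hΦ n hnK).differentiable one_ne_zero).differentiableAt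
    have hcomp : fderiv ℝ (compChain Φ (n + 1)) z
        = (fderiv ℝ (Φ n) (compChain Φ n z)).comp (fderiv ℝ (compChain Φ n) z) :=
      fderiv_comp z hdiff1 hdiff2
    rw [hcomp]
    calc (∏ t ∈ Finset.range (n + 1), lam t) * ‖v‖
        = lam n * ((∏ t ∈ Finset.range n, lam t) * ‖v‖) := by
          rw [Finset.prod_range_succ]; ring
      _ ≤ lam n * ‖fderiv ℝ (compChain Φ n) z v‖ :=
          mul_le_mul_of_nonneg_left (ih hnK z v) (hlam n hn).le
      _ ≤ ‖fderiv ℝ (Φ n) (compChain Φ n z) (fderiv ℝ (compChain Φ n) z v)‖ := hD n hn _ _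
      _ = ‖((fderiv ℝ (Φ n) (compChain Φ n z)).comp (fderiv ℝ (compChain Φ n) z)) v‖ := rfl

end chains

/-- **K-step precision tradeoff.**
Let `Φ_0, …, Φ_{K−1}` be `C¹` diffeomorphisms of `ℝ^d` with `‖DΦ_t(z) v‖ ≥ λ_t ‖v‖`
everywhere, and `F^{(K)} = Φ_{K−1} ∘ ⋯ ∘ Φ_0`. Let `μ` be a probability measure
absolutely continuous w.r.t. Lebesgue measure with density `ρ ≤ ρ_max` a.e., and
`Vol(M_δ) ≤ C δ^{d−k}`. Then `F^{(K)}` is injective, `‖DF^{(K)}(z) v‖ ≥ (∏ λ_t)‖v‖`,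
and for any measurable `S ⊆ M_δ` the hallucination probability satisfies
`μ{z : F^{(K)} z ∉ S} ≥ 1 − C ρ_max (∏ λ_t)^{−d} δ^{d−k}`; in particular if
`λ_t ≥ λ ∈ (0,1]` for all `t`, it is at least `1 − C ρ_max λ^{−dK} δ^{d−k}`. -/
theorem k_step_precision_tradeoff
    {d k K : ℕ} (hK : 1 ≤ K) (hkd : k < d)
    (Φ : ℕ → EuclideanSpace ℝ (Fin d) → EuclideanSpace ℝ (Fin d))
    (Φinv : ℕ → EuclideanSpace ℝ (Fin d) → EuclideanSpace ℝ (Fin d))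
    (hΦ : ∀ t < K, ContDiff ℝ 1 (Φ t))
    (hΦinv : ∀ t < K, ContDiff ℝ 1 (Φinv t))
    (hleft : ∀ t < K, Function.LeftInverse (Φinv t) (Φ t))
    (hright : ∀ t < K, Function.RightInverse (Φinv t) (Φ t))
    (lam : ℕ → ℝ) (hlam : ∀ t < K, 0 < lam t)
    (hD : ∀ t < K, ∀ z v, lam t * ‖v‖ ≤ ‖fderiv ℝ (Φ t) z v‖)
    (ρ : EuclideanSpace ℝ (Fin d) → ENNReal) (hρmeas : Measurable ρ)
    (μ : Measure (EuclideanSpace ℝ (Fin d))) [IsProbabilityMeasure μ]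
    (hμ : μ = volume.withDensity ρ)
    (ρmax : ℝ)
    (hρmax : ∀ᵐ z ∂(volume : Measure (EuclideanSpace ℝ (Fin d))), ρ z ≤ ENNReal.ofReal ρmax)
    (C δ : ℝ) (hC : 0 < C) (hδ : 0 < δ)
    (Mδ : Set (EuclideanSpace ℝ (Fin d))) (hMmeas : MeasurableSet Mδ)
    (hvol : volume Mδ ≤ ENNReal.ofReal (C * δ ^ (d - k))) :
    Function.Injective (compChain Φ K) ∧
    (∀ z v, (∏ t ∈ Finset.range K, lam t) * ‖v‖ ≤ ‖fderiv ℝ (compChain Φ K) z v‖) ∧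
    (∀ S : Set (EuclideanSpace ℝ (Fin d)), MeasurableSet S → S ⊆ Mδ →
      1 - ENNReal.ofReal (C * ρmax * ((∏ t ∈ Finset.range K, lam t)⁻¹) ^ d * δ ^ (d - k))
        ≤ μ {z | compChain Φ K z ∉ S}) ∧
    (∀ lam0 : ℝ, lam0 ∈ Set.Ioc (0 : ℝ) 1 → (∀ t < K, lam0 ≤ lam t) →
      ∀ S : Set (EuclideanSpace ℝ (Fin d)), MeasurableSet S → S ⊆ Mδ →
        1 - ENNReal.ofReal (C * ρmax * (lam0⁻¹) ^ (d * K) * δ ^ (d - k))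
          ≤ μ {z | compChain Φ K z ∉ S}) := by
  set F : EuclideanSpace ℝ (Fin d) → EuclideanSpace ℝ (Fin d) := compChain Φ K with hF
  set G : EuclideanSpace ℝ (Fin d) → EuclideanSpace ℝ (Fin d) := invChain Φinv K with hG
  set Λ : ℝ := ∏ t ∈ Finset.range K, lam t with hΛdef
  have hΛpos : 0 < Λ := Finset.prod_pos fun t ht => hlam t (Finset.mem_range.1 ht)
  have hGF : Function.LeftInverse G F := invChain_leftInverse hleft K le_rfl
  have hFG : Function.RightInverse G F := invChain_rightInverse hright K le_rfl
  have hFc : ContDiff ℝ 1 F := compChain_contDiff hΦ K le_rfl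
  have hGc : ContDiff ℝ 1 G := invChain_contDiff hΦinv K le_rfl
  have hFd : Differentiable ℝ F := hFc.differentiable one_ne_zero
  have hGd : Differentiable ℝ G := hGc.differentiable one_ne_zero
  have hinj : Function.Injective F := hGF.injective
  have hderiv : ∀ z v, Λ * ‖v‖ ≤ ‖fderiv ℝ F z v‖ :=
    compChain_deriv_lb hΦ lam hlam hD K le_rfl
  -- derivative bound for the inverse map
  have hGderiv : ∀ y v, ‖fderiv ℝ G y v‖ ≤ Λ⁻¹ * ‖v‖ := by
    intro y v
    have hid : F ∘ G = id := funext hFG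
    have h1 : (fderiv ℝ F (G y)).comp (fderiv ℝ G y) = ContinuousLinearMap.id ℝ (EuclideanSpace ℝ (Fin d)) := by
      rw [← fderiv_comp y (hFd (G y)) (hGd y), hid, fderiv_id]
    have h2 : fderiv ℝ F (G y) (fderiv ℝ G y v) = v := by
      have := congrArg (fun (T : EuclideanSpace ℝ (Fin d) →L[ℝ] EuclideanSpace ℝ (Fin d)) => T v) h1
      simpa using this
    have h3 : Λ * ‖fderiv ℝ G y v‖ ≤ ‖v‖ := by
      have := hderiv (G y) (fderiv ℝ G y v)
      rwa [h2] at this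
    have h4 := mul_le_mul_of_nonneg_left h3 (inv_nonneg.2 hΛpos.le)
    rwa [← mul_assoc, inv_mul_cancel₀ hΛpos.ne', one_mul] at h4
  have hGop : ∀ y, ‖fderiv ℝ G y‖ ≤ Λ⁻¹ := fun y =>
    ContinuousLinearMap.opNorm_le_bound _ (inv_nonneg.2 hΛpos.le) fun v => hGderiv y v
  have hGdet : ∀ y, |(fderiv ℝ G y).det| ≤ Λ⁻¹ ^ d := fun y =>
    le_trans (abs_det_le_norm_pow _) (pow_le_pow_left₀ (norm_nonneg _) (hGop y) d)
  -- ρmax is nonnegative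
  have hρmax0 : 0 ≤ ρmax := by
    by_contra h
    push_neg at h
    have hz : ρ =ᵐ[(volume : Measure (EuclideanSpace ℝ (Fin d)))] 0 := by
      filter_upwards [hρmax] with z hz
      simpa [ENNReal.ofReal_eq_zero.2 h.le] using hz
    have : μ Set.univ = 0 := by
      rw [hμ, withDensity_congr_ae hz, withDensity_zero]; simp
    rw [measure_univ] at this
    exact one_ne_zero this
  -- the main probability bound
  have main : ∀ S : Set (EuclideanSpace ℝ (Fin d)), MeasurableSet S → S ⊆ Mδ →
      1 - ENNReal.ofReal (C * ρmax * (Λ⁻¹) ^ d * δ ^ (d - k)) ≤ μ {z | F z ∉ S} := by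
    intro S hS hSM
    have hFmeas : Measurable F := hFc.continuous.measurable
    have hpre : MeasurableSet (F ⁻¹' S) := hFmeas hS
    have himg : F ⁻¹' S = G '' S := by
      ext x
      constructor
      · intro hx
        exact ⟨F x, hx, hGF x⟩
      · rintro ⟨s, hs, rfl⟩
        show F (G s) ∈ S
        rwa [hFG s]
    have hvolS : volume S ≤ ENNReal.ofReal (C * δ ^ (d - k)) :=
      le_trans (measure_mono hSM) hvol
    have hvolA : volume (F ⁻¹' S) ≤ ENNReal.ofReal (Λ⁻¹ ^ d) * ENNReal.ofReal (C * δ ^ (d - k)) := by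
      rw [himg]
      calc volume (G '' S)
          ≤ ∫⁻ x in S, ENNReal.ofReal |(fderiv ℝ G x).det| ∂volume :=
            addHaar_image_le_lintegral_abs_det_fderiv volume hS
              (fun x _ => (hGd x).hasFDerivAt.hasFDerivWithinAt)
        _ ≤ ∫⁻ _ in S, ENNReal.ofReal (Λ⁻¹ ^ d) ∂volume :=
            lintegral_mono fun x => ENNReal.ofReal_le_ofReal (hGdet x)
        _ = ENNReal.ofReal (Λ⁻¹ ^ d) * volume S := by
            rw [setLIntegral_const]
        _ ≤ ENNReal.ofReal (Λ⁻¹ ^ d) * ENNReal.ofReal (C * δ ^ (d - k)) :=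
            mul_le_mul_right hvolS _
    have hμA : μ (F ⁻¹' S) ≤ ENNReal.ofReal (C * ρmax * (Λ⁻¹) ^ d * δ ^ (d - k)) := by
      have h1 : μ (F ⁻¹' S) = ∫⁻ x in F ⁻¹' S, ρ x ∂volume := by
        rw [hμ, withDensity_apply ρ hpre]
      rw [h1]
      calc ∫⁻ x in F ⁻¹' S, ρ x ∂volume
          ≤ ∫⁻ _ in F ⁻¹' S, ENNReal.ofReal ρmax ∂volume :=
            lintegral_mono_ae (ae_restrict_of_ae hρmax)
        _ = ENNReal.ofReal ρmax * volume (F ⁻¹' S) := by rw [setLIntegral_const]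
        _ ≤ ENNReal.ofReal ρmax * (ENNReal.ofReal (Λ⁻¹ ^ d) * ENNReal.ofReal (C * δ ^ (d - k))) :=
            mul_le_mul_right hvolA _
        _ = ENNReal.ofReal (C * ρmax * (Λ⁻¹) ^ d * δ ^ (d - k)) := by
            rw [← ENNReal.ofReal_mul (by positivity : (0:ℝ) ≤ Λ⁻¹ ^ d),
              ← ENNReal.ofReal_mul hρmax0]
            congr 1; ring
    have hset : {z | F z ∉ S} = (F ⁻¹' S)ᶜ := rfl
    rw [hset, measure_compl hpre (measure_ne_top μ _), measure_univ]
    exact tsub_le_tsub_left hμA 1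
  refine ⟨hinj, hderiv, main, ?_⟩
  intro lam0 hlam0 hlamle S hS hSM
  refine le_trans ?_ (main S hS hSM)
  apply tsub_le_tsub_left
  apply ENNReal.ofReal_le_ofReal
  have hl0 : 0 < lam0 := hlam0.1
  have hΛge : lam0 ^ K ≤ Λ := by
    have h := Finset.prod_le_prod (f := fun _ => lam0) (g := lam)
      (fun t (_ : t ∈ Finset.range K) => hl0.le)
      (fun t ht => hlamle t (Finset.mem_range.1 ht))
    simpa [Finset.prod_const, Finset.card_range] using h
  have hinv : Λ⁻¹ ≤ (lam0 ^ K)⁻¹ :=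
    inv_anti₀ (pow_pos hl0 K) hΛge
  have hpow : Λ⁻¹ ^ d ≤ (lam0⁻¹) ^ (d * K) := by
    calc Λ⁻¹ ^ d ≤ ((lam0 ^ K)⁻¹) ^ d :=
          pow_le_pow_left₀ (inv_nonneg.2 hΛpos.le) hinv d
      _ = (lam0⁻¹) ^ (d * K) := by
          rw [← inv_pow, ← pow_mul, Nat.mul_comm]
  have hnn : 0 ≤ C * ρmax * δ ^ (d - k) := by positivity
  nlinarith [pow_nonneg (inv_nonneg.2 hΛpos.le) d, pow_nonneg (inv_nonneg.2 hl0.le) (d * K),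
    mul_le_mul_of_nonneg_left hpow hnn]
end

section
/- Let p ≥ 0 be a real number and q ≥ 1 an integer. Then Σ_{j=1}^q j^p ≤ ((q+1)^{p+1} − 1)/(p+1). Consequently, if γ ∈ (0,1), T ≥ 1 is an integer, α, β ≥ 0 with α + β < 1, and ρ_1, …, ρ_q ∈ [0,1] satisfy ρ_j ≤ γ^T · j^p for all j and Σ_{j=1}^q ρ_j ≥ 1 − α − β, then q ≥ (1 + (p+1)(1 − α − β)/γ^T)^{1/(p+1)} − 1. -/
private lemma bernoulli_step (p : ℝ) (hp : 0 ≤ p) (a : ℝ) (ha : 1 ≤ a) :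
    (p + 1) * a ^ p ≤ (a + 1) ^ (p + 1) - a ^ (p + 1) := by
  have ha0 : (0:ℝ) < a := lt_of_lt_of_le one_pos ha
  have hinv : (0:ℝ) ≤ 1 / a := by positivity
  have key : 1 + (p + 1) * (1 / a) ≤ (1 + 1 / a) ^ (p + 1) :=
    one_add_mul_self_le_rpow_one_add (by linarith) (by linarith)
  have heq : (a + 1) ^ (p + 1) = a ^ (p + 1) * (1 + 1 / a) ^ (p + 1) := by
    rw [← Real.mul_rpow (le_of_lt ha0) (by positivity)]
    congr 1
    field_simp
  have hap : a ^ (p + 1) = a ^ p * a := Real.rpow_add_one (ne_of_gt ha0) p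
  have h2 : a ^ (p + 1) * (1 + (p + 1) * (1 / a)) ≤ a ^ (p + 1) * (1 + 1 / a) ^ (p + 1) :=
    mul_le_mul_of_nonneg_left key (by positivity)
  have h3 : a ^ (p + 1) * (1 + (p + 1) * (1 / a)) = a ^ (p + 1) + (p + 1) * a ^ p := by
    rw [hap]; field_simp
  rw [heq]; linarith [h2, h3.symm.le]

private lemma sum_pow_le (p : ℝ) (hp : 0 ≤ p) (q : ℕ) :
    (∑ j ∈ Finset.Icc 1 q, ((j : ℝ) ^ p))
        ≤ (((q : ℝ) + 1) ^ (p + 1) - 1) / (p + 1) := by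
  have hp1 : (0:ℝ) < p + 1 := by linarith
  induction q with
  | zero => simp
  | succ n ih =>
    rw [Finset.sum_Icc_succ_top (by omega)]
    have hb := bernoulli_step p hp ((n:ℝ) + 1)
      (le_add_of_nonneg_left (Nat.cast_nonneg n))
    push_cast
    rw [le_div_iff₀ hp1] at ih ⊢
    nlinarith [ih, hb]

/-- **Polynomial amplification is insufficient (part (i) of the amplification-rate
theorem).** For real `p ≥ 0` and integer `q ≥ 1`,
`Σ_{j=1}^q j^p ≤ ((q+1)^{p+1} − 1)/(p+1)`. Consequently, if `γ ∈ (0,1)`, `T ≥ 1`,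
`α, β ≥ 0` with `α + β < 1`, and `ρ_j ∈ [0,1]` satisfy `ρ_j ≤ γ^T j^p` for all `j`
and `Σ_{j=1}^q ρ_j ≥ 1 − α − β`, then
`q ≥ (1 + (p+1)(1 − α − β)/γ^T)^{1/(p+1)} − 1`. -/
theorem polynomial_amplification_insufficient
    (p : ℝ) (hp : 0 ≤ p) (q : ℕ) (hq : 1 ≤ q) :
    (∑ j ∈ Finset.Icc 1 q, ((j : ℝ) ^ p))
        ≤ (((q : ℝ) + 1) ^ (p + 1) - 1) / (p + 1) ∧
    ∀ (γ : ℝ), γ ∈ Set.Ioo (0 : ℝ) 1 → ∀ T : ℕ, 1 ≤ T →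
      ∀ α β : ℝ, 0 ≤ α → 0 ≤ β → α + β < 1 →
      ∀ ρ : ℕ → ℝ, (∀ j ∈ Finset.Icc 1 q, ρ j ∈ Set.Icc (0 : ℝ) 1) →
        (∀ j ∈ Finset.Icc 1 q, ρ j ≤ γ ^ T * (j : ℝ) ^ p) →
        1 - α - β ≤ ∑ j ∈ Finset.Icc 1 q, ρ j →
        (1 + (p + 1) * (1 - α - β) / γ ^ T) ^ (1 / (p + 1)) - 1 ≤ (q : ℝ) := by
  have hp1 : (0:ℝ) < p + 1 := by linarith
  refine ⟨sum_pow_le p hp q, ?_⟩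
  rintro γ ⟨hγ0, hγ1⟩ T hT α β hα hβ hαβ ρ hρ01 hρle hsum
  have hγT : (0:ℝ) < γ ^ T := by positivity
  have h1 : ∑ j ∈ Finset.Icc 1 q, ρ j ≤ γ ^ T * ∑ j ∈ Finset.Icc 1 q, ((j:ℝ) ^ p) := by
    rw [Finset.mul_sum]
    exact Finset.sum_le_sum hρle
  have h2 : 1 - α - β ≤ γ ^ T * ((((q : ℝ) + 1) ^ (p + 1) - 1) / (p + 1)) :=
    le_trans (le_trans hsum h1)
      (mul_le_mul_of_nonneg_left (sum_pow_le p hp q) (le_of_lt hγT))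
  have h3 : 1 + (p + 1) * (1 - α - β) / γ ^ T ≤ ((q:ℝ) + 1) ^ (p + 1) := by
    rw [← mul_div_assoc, le_div_iff₀ hp1] at h2
    have hd : (p + 1) * (1 - α - β) / γ ^ T ≤ ((q:ℝ) + 1) ^ (p + 1) - 1 := by
      rw [div_le_iff₀ hγT]; nlinarith [h2]
    linarith
  have hbase : (0:ℝ) ≤ 1 + (p + 1) * (1 - α - β) / γ ^ T := by
    have : (0:ℝ) ≤ (p + 1) * (1 - α - β) / γ ^ T := by
      apply div_nonneg _ hγT.le; nlinarith
    linarith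
  have h4 : (1 + (p + 1) * (1 - α - β) / γ ^ T) ^ (1 / (p + 1))
      ≤ (((q:ℝ) + 1) ^ (p + 1)) ^ (1 / (p + 1)) :=
    Real.rpow_le_rpow hbase h3 (by positivity)
  have h5 : (((q:ℝ) + 1) ^ (p + 1)) ^ (1 / (p + 1)) = (q:ℝ) + 1 := by
    rw [← Real.rpow_mul (by positivity), mul_one_div_cancel (ne_of_gt hp1), Real.rpow_one]
  linarith [h4, h5.le]
end
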